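/- Let a < b, let G₁, G₂, G₃ : ℝ³ → ℝ be continuous on [a,b]³, and let v : ℝ → ℝ be continuous on [a,b]. Define (𝒢[v⊗v])(s) = ∫_a^s ∫_a^θ G₁(s,θ,η)v(θ)v(η) dη dθ + ∫_s^b ∫_a^s G₂(s,θ,η)v(θ)v(η) dη dθ + ∫_s^b ∫_s^θ G₃(s,θ,η)v(θ)v(η) dη dθ, and define K(s,θ,η) = G₁(s,θ,η) + G₂(θ,s,η) + G₃(η,s,θ). Then ∫_a^b v(s)·(𝒢[v⊗v])(s) ds = ∫_a^b ∫_a^s ∫_a^θ K(s,θ,η) v(s)v(θ)v(η) dη dθ ds. -/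

import Mathlib

open MeasureTheory

/-- Tensor-product partial integral operator with kernels `G₁, G₂, G₃` on `[a,b]`,
applied to a two-variable function `w`, evaluated at `s`. -/
noncomputable def tensorPI (a b : ℝ) (G₁ G₂ G₃ : ℝ → ℝ → ℝ → ℝ)
    (w : ℝ → ℝ → ℝ) (s : ℝ) : ℝ :=
  (∫ θ in a..s, ∫ η in a..θ, G₁ s θ η * w θ η)
    + (∫ θ in s..b, ∫ η in a..s, G₂ s θ η * w θ η)
    + (∫ θ in s..b, ∫ η in s..θ, G₃ s θ η * w θ η)

namespace QuadToLin

lemma intInt_congr {f g : ℝ → ℝ} {a b : ℝ} (hab : a ≤ b)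
    (h : ∀ x ∈ Set.Ioc a b, f x = g x) :
    (∫ x in a..b, f x) = ∫ x in a..b, g x := by
  rw [intervalIntegral.integral_of_le hab, intervalIntegral.integral_of_le hab]
  exact setIntegral_congr_fun measurableSet_Ioc h

lemma exists_cont_ext {X : Type*} [TopologicalSpace X] [NormalSpace X] {s : Set X}
    (hs : IsClosed s) {f : X → ℝ} (hf : ContinuousOn f s) :
    ∃ g : X → ℝ, Continuous g ∧ Set.EqOn g f s := by
  obtain ⟨g, hg⟩ := ContinuousMap.exists_restrict_eq hs ⟨s.restrict f, hf.restrict⟩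
  exact ⟨g, g.continuous, fun x hx => by
    have := congrFun (congrArg DFunLike.coe hg) ⟨x, hx⟩
    exact this⟩

lemma triangle_swap {a b : ℝ} (hab : a ≤ b) (g : ℝ → ℝ → ℝ)
    (hg : Continuous (Function.uncurry g)) :
    (∫ s in a..b, ∫ θ in s..b, g s θ) = ∫ s in a..b, ∫ θ in a..s, g θ s := by
  set S : Set (ℝ × ℝ) := {p : ℝ × ℝ | p.1 ≤ p.2} with hS
  have hSm : MeasurableSet S := isClosed_le continuous_fst continuous_snd |>.measurableSet
  set F : ℝ × ℝ → ℝ := S.indicator (Function.uncurry g) with hF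
  have hgi : Integrable (Function.uncurry g)
      ((volume.restrict (Set.Ioc a b)).prod (volume.restrict (Set.Ioc a b))) := by
    rw [Measure.prod_restrict, ← Measure.volume_eq_prod]
    exact ((hg.continuousOn).integrableOn_compact (isCompact_Icc.prod isCompact_Icc)).mono_set
      (Set.prod_mono Set.Ioc_subset_Icc_self Set.Ioc_subset_Icc_self)
  have hFi : Integrable (Function.uncurry fun s θ => F (s, θ))
      ((volume.restrict (Set.Ioc a b)).prod (volume.restrict (Set.Ioc a b))) := by
    have := hgi.indicator hSm
    exact this
  have stepA : (∫ s in a..b, ∫ θ in s..b, g s θ)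
      = ∫ s in Set.Ioc a b, ∫ θ in Set.Ioc a b, F (s, θ) := by
    rw [intervalIntegral.integral_of_le hab]
    refine setIntegral_congr_fun measurableSet_Ioc (fun s hs => ?_)
    have h1 : ∀ θ, F (s, θ) = (Set.Ici s).indicator (fun θ => g s θ) θ := by
      intro θ
      by_cases h : s ≤ θ <;>
        simp [hF, hS, Set.indicator, h, Function.uncurry]
    simp only [h1]
    rw [setIntegral_indicator measurableSet_Ici]
    have h2 : Set.Ioc a b ∩ Set.Ici s = Set.Icc s b := by
      ext θ
      simp only [Set.mem_inter_iff, Set.mem_Ioc, Set.mem_Ici, Set.mem_Icc]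
      exact ⟨fun ⟨⟨_, h2⟩, h3⟩ => ⟨h3, h2⟩,
        fun ⟨h3, h2⟩ => ⟨⟨lt_of_lt_of_le hs.1 h3, h2⟩, h3⟩⟩
    rw [h2, integral_Icc_eq_integral_Ioc, ← intervalIntegral.integral_of_le hs.2]
  have stepC : (∫ θ in Set.Ioc a b, ∫ s in Set.Ioc a b, F (s, θ))
      = ∫ s in a..b, ∫ θ in a..s, g θ s := by
    rw [intervalIntegral.integral_of_le hab]
    refine setIntegral_congr_fun measurableSet_Ioc (fun θ hθ => ?_)
    have h1 : ∀ s, F (s, θ) = (Set.Iic θ).indicator (fun s => g s θ) s := by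
      intro s
      by_cases h : s ≤ θ <;>
        simp [hF, hS, Set.indicator, h, Function.uncurry]
    simp only [h1]
    rw [setIntegral_indicator measurableSet_Iic]
    have h2 : Set.Ioc a b ∩ Set.Iic θ = Set.Ioc a θ := by
      ext s
      simp only [Set.mem_inter_iff, Set.mem_Ioc, Set.mem_Iic]
      exact ⟨fun ⟨⟨h1', _⟩, h3⟩ => ⟨h1', h3⟩,
        fun ⟨h1', h3⟩ => ⟨⟨h1', h3.trans hθ.2⟩, h3⟩⟩
    rw [h2, ← intervalIntegral.integral_of_le hθ.1.le]
  rw [stepA, ← stepC]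
  exact integral_integral_swap hFi

lemma cont_param2 {f : ℝ → ℝ → ℝ → ℝ}
    (h : Continuous fun p : ℝ × ℝ × ℝ => f p.1 p.2.1 p.2.2)
    {l u : ℝ × ℝ → ℝ} (hl : Continuous l) (hu : Continuous u) :
    Continuous fun p : ℝ × ℝ => ∫ η in l p..u p, f p.1 p.2 η := by
  have hunc : Continuous (Function.uncurry fun (p : ℝ × ℝ) η => f p.1 p.2 η) := by
    have : Function.uncurry (fun (p : ℝ × ℝ) η => f p.1 p.2 η)
        = (fun p : ℝ × ℝ × ℝ => f p.1 p.2.1 p.2.2) ∘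
          (fun q : (ℝ × ℝ) × ℝ => (q.1.1, q.1.2, q.2)) := rfl
    rw [this]
    exact h.comp (by fun_prop)
  have h1 := intervalIntegral.continuous_parametric_intervalIntegral_of_continuous
    (μ := volume) (a₀ := 0) hunc hu
  have h2 := intervalIntegral.continuous_parametric_intervalIntegral_of_continuous
    (μ := volume) (a₀ := 0) hunc hl
  have key : (fun p : ℝ × ℝ => ∫ η in l p..u p, f p.1 p.2 η)
      = fun p => (∫ η in (0:ℝ)..u p, f p.1 p.2 η) - ∫ η in (0:ℝ)..l p, f p.1 p.2 η := by
    funext p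
    have hi : ∀ c d : ℝ, IntervalIntegrable (fun η => f p.1 p.2 η) volume c d := by
      intro c d
      exact (h.comp (by fun_prop : Continuous fun η : ℝ => (p.1, p.2, η))).intervalIntegrable c d
    rw [intervalIntegral.integral_interval_sub_left (hi 0 (u p)) (hi 0 (l p))]
  rw [key]
  exact h1.sub h2

lemma cont_param1 {H : ℝ → ℝ → ℝ}
    (h : Continuous fun p : ℝ × ℝ => H p.1 p.2)
    {l u : ℝ → ℝ} (hl : Continuous l) (hu : Continuous u) :
    Continuous fun s : ℝ => ∫ θ in l s..u s, H s θ := by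
  have hunc : Continuous (Function.uncurry fun (s : ℝ) θ => H s θ) := by
    have : Function.uncurry (fun (s : ℝ) θ => H s θ)
        = (fun p : ℝ × ℝ => H p.1 p.2) ∘ (fun q : ℝ × ℝ => (q.1, q.2)) := rfl
    rw [this]
    exact h.comp (by fun_prop)
  have h1 := intervalIntegral.continuous_parametric_intervalIntegral_of_continuous
    (μ := volume) (a₀ := 0) hunc hu
  have h2 := intervalIntegral.continuous_parametric_intervalIntegral_of_continuous
    (μ := volume) (a₀ := 0) hunc hl
  have key : (fun s : ℝ => ∫ θ in l s..u s, H s θ)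
      = fun s => (∫ θ in (0:ℝ)..u s, H s θ) - ∫ θ in (0:ℝ)..l s, H s θ := by
    funext s
    have hi : ∀ c d : ℝ, IntervalIntegrable (fun θ => H s θ) volume c d := by
      intro c d
      exact (h.comp (by fun_prop : Continuous fun θ : ℝ => (s, θ))).intervalIntegrable c d
    rw [intervalIntegral.integral_interval_sub_left (hi 0 (u s)) (hi 0 (l s))]
  rw [key]
  exact h1.sub h2

lemma key_lemma (a b : ℝ) (hab : a ≤ b) (f₁ f₂ f₃ : ℝ → ℝ → ℝ → ℝ)
    (h₁ : Continuous fun p : ℝ × ℝ × ℝ => f₁ p.1 p.2.1 p.2.2)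
    (h₂ : Continuous fun p : ℝ × ℝ × ℝ => f₂ p.1 p.2.1 p.2.2)
    (h₃ : Continuous fun p : ℝ × ℝ × ℝ => f₃ p.1 p.2.1 p.2.2) :
    (∫ s in a..b, ((∫ θ in a..s, ∫ η in a..θ, f₁ s θ η)
        + (∫ θ in s..b, ∫ η in a..s, f₂ s θ η)
        + (∫ θ in s..b, ∫ η in s..θ, f₃ s θ η)))
    = ∫ s in a..b, ∫ θ in a..s, ∫ η in a..θ, (f₁ s θ η + f₂ θ s η + f₃ η s θ) := by
  have cX : Continuous fun s : ℝ => ∫ θ in a..s, ∫ η in a..θ, f₁ s θ η :=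
    cont_param1 (cont_param2 h₁ continuous_const continuous_snd)
      continuous_const continuous_id
  have cY : Continuous fun s : ℝ => ∫ θ in s..b, ∫ η in a..s, f₂ s θ η :=
    cont_param1 (cont_param2 h₂ continuous_const continuous_fst)
      continuous_id continuous_const
  have cZ : Continuous fun s : ℝ => ∫ θ in s..b, ∫ η in s..θ, f₃ s θ η :=
    cont_param1 (cont_param2 h₃ continuous_fst continuous_snd)
      continuous_id continuous_const
  have e₂ : (∫ s in a..b, ∫ θ in s..b, ∫ η in a..s, f₂ s θ η)
      = ∫ s in a..b, ∫ θ in a..s, ∫ η in a..θ, f₂ θ s η :=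
    triangle_swap hab (fun s θ => ∫ η in a..s, f₂ s θ η)
      (cont_param2 h₂ continuous_const continuous_fst)
  have e₃ : (∫ s in a..b, ∫ θ in s..b, ∫ η in s..θ, f₃ s θ η)
      = ∫ s in a..b, ∫ θ in a..s, ∫ η in a..θ, f₃ η s θ := by
    rw [triangle_swap hab (fun s θ => ∫ η in s..θ, f₃ s θ η)
      (cont_param2 h₃ continuous_fst continuous_snd)]
    refine intInt_congr hab (fun s hs => ?_)
    exact triangle_swap hs.1.le (fun θ η => f₃ θ s η)
      (h₃.comp (by fun_prop : Continuous fun p : ℝ × ℝ => (p.1, s, p.2)))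
  have splitL : (∫ s in a..b, ((∫ θ in a..s, ∫ η in a..θ, f₁ s θ η)
        + (∫ θ in s..b, ∫ η in a..s, f₂ s θ η)
        + (∫ θ in s..b, ∫ η in s..θ, f₃ s θ η)))
      = (∫ s in a..b, ∫ θ in a..s, ∫ η in a..θ, f₁ s θ η)
        + (∫ s in a..b, ∫ θ in s..b, ∫ η in a..s, f₂ s θ η)
        + (∫ s in a..b, ∫ θ in s..b, ∫ η in s..θ, f₃ s θ η) := by
    rw [intervalIntegral.integral_add ((cX.intervalIntegrable a b).add (cY.intervalIntegrable a b))
      (cZ.intervalIntegrable a b),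
      intervalIntegral.integral_add (cX.intervalIntegrable a b) (cY.intervalIntegrable a b)]
  have inner : ∀ s θ : ℝ, (∫ η in a..θ, (f₁ s θ η + f₂ θ s η + f₃ η s θ))
      = (∫ η in a..θ, f₁ s θ η) + (∫ η in a..θ, f₂ θ s η) + (∫ η in a..θ, f₃ η s θ) := by
    intro s θ
    have i1 : IntervalIntegrable (fun η => f₁ s θ η) volume a θ :=
      (h₁.comp (by fun_prop : Continuous fun η : ℝ => (s, θ, η))).intervalIntegrable _ _
    have i2 : IntervalIntegrable (fun η => f₂ θ s η) volume a θ :=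
      (h₂.comp (by fun_prop : Continuous fun η : ℝ => (θ, s, η))).intervalIntegrable _ _
    have i3 : IntervalIntegrable (fun η => f₃ η s θ) volume a θ :=
      (h₃.comp (by fun_prop : Continuous fun η : ℝ => (η, s, θ))).intervalIntegrable _ _
    rw [intervalIntegral.integral_add (i1.add i2) i3, intervalIntegral.integral_add i1 i2]
  have mid : ∀ s : ℝ, (∫ θ in a..s, ∫ η in a..θ, (f₁ s θ η + f₂ θ s η + f₃ η s θ))
      = (∫ θ in a..s, ∫ η in a..θ, f₁ s θ η) + (∫ θ in a..s, ∫ η in a..θ, f₂ θ s η)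
        + (∫ θ in a..s, ∫ η in a..θ, f₃ η s θ) := by
    intro s
    have p1 : Continuous fun θ : ℝ => ∫ η in a..θ, f₁ s θ η :=
      cont_param1 (h₁.comp (by fun_prop : Continuous fun p : ℝ × ℝ => (s, p.1, p.2)))
        continuous_const continuous_id
    have p2 : Continuous fun θ : ℝ => ∫ η in a..θ, f₂ θ s η :=
      cont_param1 (h₂.comp (by fun_prop : Continuous fun p : ℝ × ℝ => (p.1, s, p.2)))
        continuous_const continuous_id
    have p3 : Continuous fun θ : ℝ => ∫ η in a..θ, f₃ η s θ :=
      cont_param1 (h₃.comp (by fun_prop : Continuous fun p : ℝ × ℝ => (p.2, s, p.1)))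
        continuous_const continuous_id
    calc (∫ θ in a..s, ∫ η in a..θ, (f₁ s θ η + f₂ θ s η + f₃ η s θ))
        = ∫ θ in a..s, ((∫ η in a..θ, f₁ s θ η) + (∫ η in a..θ, f₂ θ s η)
            + (∫ η in a..θ, f₃ η s θ)) :=
          intervalIntegral.integral_congr (fun θ _ => inner s θ)
      _ = (∫ θ in a..s, ∫ η in a..θ, f₁ s θ η) + (∫ θ in a..s, ∫ η in a..θ, f₂ θ s η)
            + (∫ θ in a..s, ∫ η in a..θ, f₃ η s θ) := by
          rw [intervalIntegral.integral_add ((p1.intervalIntegrable a s).add (p2.intervalIntegrable a s))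
            (p3.intervalIntegrable a s),
            intervalIntegral.integral_add (p1.intervalIntegrable a s)
            (p2.intervalIntegrable a s)]
  have q2 : Continuous fun s : ℝ => ∫ θ in a..s, ∫ η in a..θ, f₂ θ s η :=
    cont_param1 (cont_param2 (f := fun s θ η => f₂ θ s η)
        (h₂.comp (by fun_prop : Continuous fun p : ℝ × ℝ × ℝ => (p.2.1, p.1, p.2.2)))
        continuous_const continuous_snd)
      continuous_const continuous_id
  have q3 : Continuous fun s : ℝ => ∫ θ in a..s, ∫ η in a..θ, f₃ η s θ :=
    cont_param1 (cont_param2 (f := fun s θ η => f₃ η s θ)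
        (h₃.comp (by fun_prop : Continuous fun p : ℝ × ℝ × ℝ => (p.2.2, p.1, p.2.1)))
        continuous_const continuous_snd)
      continuous_const continuous_id
  have splitR : (∫ s in a..b, ∫ θ in a..s, ∫ η in a..θ, (f₁ s θ η + f₂ θ s η + f₃ η s θ))
      = (∫ s in a..b, ∫ θ in a..s, ∫ η in a..θ, f₁ s θ η)
        + (∫ s in a..b, ∫ θ in a..s, ∫ η in a..θ, f₂ θ s η)
        + (∫ s in a..b, ∫ θ in a..s, ∫ η in a..θ, f₃ η s θ) :=
    calc (∫ s in a..b, ∫ θ in a..s, ∫ η in a..θ, (f₁ s θ η + f₂ θ s η + f₃ η s θ))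
        = ∫ s in a..b, ((∫ θ in a..s, ∫ η in a..θ, f₁ s θ η)
            + (∫ θ in a..s, ∫ η in a..θ, f₂ θ s η)
            + (∫ θ in a..s, ∫ η in a..θ, f₃ η s θ)) :=
          intervalIntegral.integral_congr (fun s _ => mid s)
      _ = _ := by
          rw [intervalIntegral.integral_add ((cX.intervalIntegrable a b).add (q2.intervalIntegrable a b))
            (q3.intervalIntegrable a b),
            intervalIntegral.integral_add (cX.intervalIntegrable a b)
            (q2.intervalIntegrable a b)]
  rw [splitL, splitR, e₂, e₃]

end QuadToLin

open QuadToLin in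
theorem quadratic_to_linear_representation (a b : ℝ) (hab : a < b)
    (G₁ G₂ G₃ : ℝ → ℝ → ℝ → ℝ)
    (hG₁ : ContinuousOn (fun p : ℝ × ℝ × ℝ => G₁ p.1 p.2.1 p.2.2)
      (Set.Icc a b ×ˢ Set.Icc a b ×ˢ Set.Icc a b))
    (hG₂ : ContinuousOn (fun p : ℝ × ℝ × ℝ => G₂ p.1 p.2.1 p.2.2)
      (Set.Icc a b ×ˢ Set.Icc a b ×ˢ Set.Icc a b))
    (hG₃ : ContinuousOn (fun p : ℝ × ℝ × ℝ => G₃ p.1 p.2.1 p.2.2)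
      (Set.Icc a b ×ˢ Set.Icc a b ×ˢ Set.Icc a b))
    (v : ℝ → ℝ) (hv : ContinuousOn v (Set.Icc a b)) :
    (∫ s in a..b, v s * tensorPI a b G₁ G₂ G₃ (fun θ η => v θ * v η) s)
    = ∫ s in a..b, ∫ θ in a..s, ∫ η in a..θ,
        (G₁ s θ η + G₂ θ s η + G₃ η s θ) * (v s * v θ * v η) := by
  have hbox : IsClosed (Set.Icc a b ×ˢ Set.Icc a b ×ˢ Set.Icc a b) :=
    isClosed_Icc.prod (isClosed_Icc.prod isClosed_Icc)
  obtain ⟨g₁, hg₁c, hg₁e⟩ := exists_cont_ext hbox hG₁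
  obtain ⟨g₂, hg₂c, hg₂e⟩ := exists_cont_ext hbox hG₂
  obtain ⟨g₃, hg₃c, hg₃e⟩ := exists_cont_ext hbox hG₃
  obtain ⟨w, hwc, hwe⟩ := exists_cont_ext isClosed_Icc hv
  have hcf₁ : Continuous fun p : ℝ × ℝ × ℝ =>
      g₁ (p.1, p.2.1, p.2.2) * (w p.1 * w p.2.1 * w p.2.2) := by fun_prop
  have hcf₂ : Continuous fun p : ℝ × ℝ × ℝ =>
      g₂ (p.1, p.2.1, p.2.2) * (w p.1 * w p.2.1 * w p.2.2) := by fun_prop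
  have hcf₃ : Continuous fun p : ℝ × ℝ × ℝ =>
      g₃ (p.1, p.2.1, p.2.2) * (w p.1 * w p.2.1 * w p.2.2) := by fun_prop
  have L : (∫ s in a..b, v s * tensorPI a b G₁ G₂ G₃ (fun θ η => v θ * v η) s)
      = ∫ s in a..b, ((∫ θ in a..s, ∫ η in a..θ, g₁ (s, θ, η) * (w s * w θ * w η))
          + (∫ θ in s..b, ∫ η in a..s, g₂ (s, θ, η) * (w s * w θ * w η))
          + (∫ θ in s..b, ∫ η in s..θ, g₃ (s, θ, η) * (w s * w θ * w η))) := by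
    refine intInt_congr hab.le (fun s hs => ?_)
    have hsI : s ∈ Set.Icc a b := ⟨hs.1.le, hs.2⟩
    simp only [tensorPI, mul_add]
    have t1 : v s * (∫ θ in a..s, ∫ η in a..θ, G₁ s θ η * (v θ * v η))
        = ∫ θ in a..s, ∫ η in a..θ, g₁ (s, θ, η) * (w s * w θ * w η) := by
      rw [← intervalIntegral.integral_const_mul]
      refine intInt_congr hs.1.le (fun θ hθ => ?_)
      have hθI : θ ∈ Set.Icc a b := ⟨hθ.1.le, hθ.2.trans hs.2⟩
      rw [← intervalIntegral.integral_const_mul]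
      refine intInt_congr hθ.1.le (fun η hη => ?_)
      have hηI : η ∈ Set.Icc a b := ⟨hη.1.le, hη.2.trans hθI.2⟩
      have e1 : g₁ (s, θ, η) = G₁ s θ η := hg₁e ⟨hsI, hθI, hηI⟩
      have ew1 : w s = v s := hwe hsI
      have ew2 : w θ = v θ := hwe hθI
      have ew3 : w η = v η := hwe hηI
      rw [e1, ew1, ew2, ew3]; ring
    have t2 : v s * (∫ θ in s..b, ∫ η in a..s, G₂ s θ η * (v θ * v η))
        = ∫ θ in s..b, ∫ η in a..s, g₂ (s, θ, η) * (w s * w θ * w η) := by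
      rw [← intervalIntegral.integral_const_mul]
      refine intInt_congr hs.2 (fun θ hθ => ?_)
      have hθI : θ ∈ Set.Icc a b := ⟨(hs.1.trans hθ.1).le, hθ.2⟩
      rw [← intervalIntegral.integral_const_mul]
      refine intInt_congr hs.1.le (fun η hη => ?_)
      have hηI : η ∈ Set.Icc a b := ⟨hη.1.le, hη.2.trans hs.2⟩
      have e1 : g₂ (s, θ, η) = G₂ s θ η := hg₂e ⟨hsI, hθI, hηI⟩
      have ew1 : w s = v s := hwe hsI
      have ew2 : w θ = v θ := hwe hθI
      have ew3 : w η = v η := hwe hηI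
      rw [e1, ew1, ew2, ew3]; ring
    have t3 : v s * (∫ θ in s..b, ∫ η in s..θ, G₃ s θ η * (v θ * v η))
        = ∫ θ in s..b, ∫ η in s..θ, g₃ (s, θ, η) * (w s * w θ * w η) := by
      rw [← intervalIntegral.integral_const_mul]
      refine intInt_congr hs.2 (fun θ hθ => ?_)
      have hθI : θ ∈ Set.Icc a b := ⟨(hs.1.trans hθ.1).le, hθ.2⟩
      rw [← intervalIntegral.integral_const_mul]
      refine intInt_congr hθ.1.le (fun η hη => ?_)
      have hηI : η ∈ Set.Icc a b := ⟨(hs.1.trans hη.1).le, hη.2.trans hθI.2⟩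
      have e1 : g₃ (s, θ, η) = G₃ s θ η := hg₃e ⟨hsI, hθI, hηI⟩
      have ew1 : w s = v s := hwe hsI
      have ew2 : w θ = v θ := hwe hθI
      have ew3 : w η = v η := hwe hηI
      rw [e1, ew1, ew2, ew3]; ring
    rw [t1, t2, t3]
  have R : (∫ s in a..b, ∫ θ in a..s, ∫ η in a..θ,
        (G₁ s θ η + G₂ θ s η + G₃ η s θ) * (v s * v θ * v η))
      = ∫ s in a..b, ∫ θ in a..s, ∫ η in a..θ,
          (g₁ (s, θ, η) * (w s * w θ * w η) + g₂ (θ, s, η) * (w θ * w s * w η)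
            + g₃ (η, s, θ) * (w η * w s * w θ)) := by
    refine intInt_congr hab.le (fun s hs => ?_)
    have hsI : s ∈ Set.Icc a b := ⟨hs.1.le, hs.2⟩
    refine intInt_congr hs.1.le (fun θ hθ => ?_)
    have hθI : θ ∈ Set.Icc a b := ⟨hθ.1.le, hθ.2.trans hs.2⟩
    refine intInt_congr hθ.1.le (fun η hη => ?_)
    have hηI : η ∈ Set.Icc a b := ⟨hη.1.le, hη.2.trans hθI.2⟩
    have e1 : g₁ (s, θ, η) = G₁ s θ η := hg₁e ⟨hsI, hθI, hηI⟩
    have e2 : g₂ (θ, s, η) = G₂ θ s η := hg₂e ⟨hθI, hsI, hηI⟩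
    have e3 : g₃ (η, s, θ) = G₃ η s θ := hg₃e ⟨hηI, hsI, hθI⟩
    have ew1 : w s = v s := hwe hsI
    have ew2 : w θ = v θ := hwe hθI
    have ew3 : w η = v η := hwe hηI
    rw [e1, e2, e3, ew1, ew2, ew3]; ring
  rw [L, R]
  exact key_lemma a b hab.le
    (fun s θ η => g₁ (s, θ, η) * (w s * w θ * w η))
    (fun s θ η => g₂ (s, θ, η) * (w s * w θ * w η))
    (fun s θ η => g₃ (s, θ, η) * (w s * w θ * w η))
    hcf₁ hcf₂ hcf₃
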